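/- arXiv:2308.00202 — 4 statements merged into one kernel-verified Lean document; each statement's English description precedes it below -/
import Mathlib

section
/- For each N, let X_N and Y_N be independent real-valued random variables on a probability space (Ω_N, P_N) (X_N the observed test statistic, Y_N the randomization draw), and suppose that the laws of X_N and the laws of Y_N both converge weakly, as N → ∞, to the same Borel probability measure μ on ℝ whose CDF G(x) = μ((−∞, x]) is continuous. Define the p-value function p_N(x) = P_N(Y_N ≥ x) and the random p-value P_N := p_N(X_N). Then for every α ∈ [0,1], limsup_{N→∞} P_N(P_N ≤ α) ≤ α. -/
open MeasureTheory Filter Topology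

lemma stmt4_atom (μ : Measure ℝ) [IsProbabilityMeasure μ]
    (G : ℝ → ℝ) (hG : ∀ x, G x = (μ (Set.Iic x)).toReal) (hGcont : Continuous G)
    (x : ℝ) : μ {x} = 0 := by
  have h1 : ∀ n : ℕ, (μ {x}).toReal ≤ G x - G (x - 1 / (n + 1)) := by
    intro n
    have hd : (0 : ℝ) < 1 / (n + 1) := by positivity
    have hdisj : Disjoint (Set.Iic (x - 1 / (n + 1))) ({x} : Set ℝ) := by
      simp only [Set.disjoint_singleton_right, Set.mem_Iic, not_le]
      linarith
    have hun : μ (Set.Iic (x - 1 / (n + 1)) ∪ {x})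
        = μ (Set.Iic (x - 1 / (n + 1))) + μ {x} :=
      measure_union hdisj (measurableSet_singleton x)
    have hsub : Set.Iic (x - 1 / (n + 1)) ∪ {x} ⊆ Set.Iic x := by
      intro y hy
      rcases hy with hy | hy
      · exact le_trans (Set.mem_Iic.mp hy) (by linarith)
      · simp only [Set.mem_singleton_iff] at hy
        simp [hy]
    have hle : μ (Set.Iic (x - 1 / (n + 1))) + μ {x} ≤ μ (Set.Iic x) := by
      rw [← hun]; exact measure_mono hsub
    have hle' := ENNReal.toReal_mono (measure_ne_top μ _) hle
    rw [ENNReal.toReal_add (measure_ne_top μ _) (measure_ne_top μ _)] at hle'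
    rw [hG, hG]
    linarith
  have ht : Tendsto (fun n : ℕ => G x - G (x - 1 / (n + 1))) atTop (𝓝 (G x - G x)) := by
    refine tendsto_const_nhds.sub ?_
    have harg : Tendsto (fun n : ℕ => x - 1 / ((n : ℝ) + 1)) atTop (𝓝 (x - 0)) :=
      tendsto_const_nhds.sub tendsto_one_div_add_atTop_nhds_zero_nat
    rw [sub_zero] at harg
    exact (hGcont.continuousAt.tendsto).comp harg
  have hfin : (μ {x}).toReal ≤ G x - G x := ge_of_tendsto' ht h1
  rw [sub_self] at hfin
  have h0 : (μ {x}).toReal = 0 := le_antisymm hfin ENNReal.toReal_nonneg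
  exact (ENNReal.toReal_eq_zero_iff _).mp h0 |>.resolve_right (measure_ne_top μ _)

/-- Asymptotic validity of the randomization p-value: if the observed statistic `X N` and the
(independent) randomization statistic `Y N` both converge in distribution to a common law `μ`
with continuous CDF, then the p-value `P_N(Y_N ≥ X_N)` is asymptotically super-uniform. -/
theorem stmt_4 (μ : Measure ℝ) [IsProbabilityMeasure μ]
    (G : ℝ → ℝ) (hG : ∀ x, G x = (μ (Set.Iic x)).toReal) (hGcont : Continuous G)
    {Ω : ℕ → Type*} [∀ N, MeasurableSpace (Ω N)]
    (P : ∀ N, Measure (Ω N)) [∀ N, IsProbabilityMeasure (P N)]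
    (X Y : ∀ N, Ω N → ℝ) (hX : ∀ N, Measurable (X N)) (hY : ∀ N, Measurable (Y N))
    (hindep : ∀ N, ProbabilityTheory.IndepFun (X N) (Y N) (P N))
    (hconvX : ∀ f : BoundedContinuousFunction ℝ ℝ,
      Tendsto (fun N => ∫ ω, f (X N ω) ∂(P N)) atTop (𝓝 (∫ x, f x ∂μ)))
    (hconvY : ∀ f : BoundedContinuousFunction ℝ ℝ,
      Tendsto (fun N => ∫ ω, f (Y N ω) ∂(P N)) atTop (𝓝 (∫ x, f x ∂μ)))
    (α : ℝ) (hα : α ∈ Set.Icc (0 : ℝ) 1) :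
    limsup (fun N =>
        ((P N) {ω | ((P N) {ω' | X N ω ≤ Y N ω'}).toReal ≤ α}).toReal) atTop ≤ α := by
  obtain ⟨hα0, hα1⟩ := hα
  set T : ℕ → ℝ :=
    fun N => ((P N) {ω | ((P N) {ω' | X N ω ≤ Y N ω'}).toReal ≤ α}).toReal with hT
  have hatom : ∀ x : ℝ, μ {x} = 0 := stmt4_atom μ G hG hGcont
  -- basic boundedness facts
  have hT01 : ∀ N, 0 ≤ T N ∧ T N ≤ 1 := by
    intro N
    constructor
    · exact ENNReal.toReal_nonneg
    · have h : (P N) {ω | ((P N) {ω' | X N ω ≤ Y N ω'}).toReal ≤ α} ≤ 1 := prob_le_one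
      have := ENNReal.toReal_mono ENNReal.one_ne_top h
      simpa using this
  have hTcobdd : IsCoboundedUnder (· ≤ ·) atTop T :=
    isCoboundedUnder_le_of_eventually_le atTop
      (Eventually.of_forall fun N => (hT01 N).1)
  -- pushforward probability measures and weak convergence
  have hmapX : ∀ N, IsProbabilityMeasure ((P N).map (X N)) :=
    fun N => Measure.isProbabilityMeasure_map (hX N).aemeasurable
  have hmapY : ∀ N, IsProbabilityMeasure ((P N).map (Y N)) :=
    fun N => Measure.isProbabilityMeasure_map (hY N).aemeasurable
  let ν : ProbabilityMeasure ℝ := ⟨μ, inferInstance⟩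
  let νX : ℕ → ProbabilityMeasure ℝ := fun N => ⟨(P N).map (X N), hmapX N⟩
  let νY : ℕ → ProbabilityMeasure ℝ := fun N => ⟨(P N).map (Y N), hmapY N⟩
  have hXlim : Tendsto νX atTop (𝓝 ν) := by
    rw [ProbabilityMeasure.tendsto_iff_forall_integral_tendsto]
    intro f
    have heq : (fun N => ∫ ω, f (X N ω) ∂(P N))
        = fun N => ∫ x, f x ∂((P N).map (X N)) :=
      funext fun N =>
        (integral_map (hX N).aemeasurable f.continuous.aestronglyMeasurable).symm
    show Tendsto (fun N => ∫ x, f x ∂((P N).map (X N))) atTop (𝓝 (∫ x, f x ∂μ))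
    rw [← heq]; exact hconvX f
  have hYlim : Tendsto νY atTop (𝓝 ν) := by
    rw [ProbabilityMeasure.tendsto_iff_forall_integral_tendsto]
    intro f
    have heq : (fun N => ∫ ω, f (Y N ω) ∂(P N))
        = fun N => ∫ x, f x ∂((P N).map (Y N)) :=
      funext fun N =>
        (integral_map (hY N).aemeasurable f.continuous.aestronglyMeasurable).symm
    show Tendsto (fun N => ∫ x, f x ∂((P N).map (Y N))) atTop (𝓝 (∫ x, f x ∂μ))
    rw [← heq]; exact hconvY f
  -- monotonicity of G
  have hGmono : Monotone G := by
    intro a b hab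
    rw [hG, hG]
    exact ENNReal.toReal_mono (measure_ne_top μ _) (measure_mono (Set.Iic_subset_Iic.mpr hab))
  -- G tends to 1 at +∞ and to 0 at -∞ (the latter via Ici at -∞)
  have hGtop : Tendsto G atTop (𝓝 1) := by
    have h1 : Tendsto (fun x : ℝ => μ (Set.Iic x)) atTop (𝓝 (μ Set.univ)) :=
      tendsto_measure_Iic_atTop μ
    rw [measure_univ] at h1
    have h2 := (ENNReal.tendsto_toReal (by simp : (1 : ENNReal) ≠ ⊤)).comp h1
    simp only [ENNReal.toReal_one] at h2
    exact h2.congr fun x => (hG x).symm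
  have hIciBot : Tendsto (fun x : ℝ => (μ (Set.Ici x)).toReal) atBot (𝓝 1) := by
    have h1 : Tendsto (fun x : ℝ => μ (Set.Ici x)) atBot (𝓝 (μ Set.univ)) :=
      tendsto_measure_Ici_atBot μ
    rw [measure_univ] at h1
    have h2 := (ENNReal.tendsto_toReal (by simp : (1 : ENNReal) ≠ ⊤)).comp h1
    simpa [Function.comp_def] using h2
  -- Key step: for every β with 0 < β and α + β < 1, limsup T ≤ α + β
  have key : ∀ β : ℝ, 0 < β → α + β < 1 → limsup T atTop ≤ α + β := by
    intro β hβ hβ1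
    set v : ℝ := 1 - (α + β) with hv
    have hv0 : 0 < v := by linarith
    have hv1 : v < 1 := by linarith
    -- find t with G t = v by IVT
    obtain ⟨b, hb⟩ : ∃ b, v < G b := (hGtop.eventually (eventually_gt_nhds hv1)).exists
    obtain ⟨a, ha⟩ : ∃ a, G a < v := by
      obtain ⟨x, hx⟩ : ∃ x, 1 - v < (μ (Set.Ici x)).toReal :=
        (hIciBot.eventually (eventually_gt_nhds (by linarith : 1 - v < 1))).exists
      refine ⟨x - 1, ?_⟩
      have hdisj : Disjoint (Set.Iic (x - 1)) (Set.Ici x) :=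
        Set.Iic_disjoint_Ici.mpr (by norm_num)
      have hun : μ (Set.Iic (x - 1)) + μ (Set.Ici x)
          = μ (Set.Iic (x - 1) ∪ Set.Ici x) :=
        (measure_union hdisj measurableSet_Ici).symm
      have hle : μ (Set.Iic (x - 1)) + μ (Set.Ici x) ≤ 1 := by
        rw [hun, ← measure_univ (μ := μ)]
        exact measure_mono (Set.subset_univ _)
      have hle' := ENNReal.toReal_mono (by simp) hle
      rw [ENNReal.toReal_add (measure_ne_top μ _) (measure_ne_top μ _),
        ENNReal.toReal_one] at hle'
      rw [hG]
      linarith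
    have hab : a ≤ b := by
      by_contra h
      push_neg at h
      exact absurd (hGmono h.le) (by linarith)
    obtain ⟨t, -, htv⟩ : ∃ t ∈ Set.Icc a b, G t = v :=
      intermediate_value_Icc hab hGcont.continuousOn ⟨ha.le, hb.le⟩
    -- the limit measure of Ici t
    have hIio : μ (Set.Iio t) = μ (Set.Iic t) := by
      rw [← Set.Iic_diff_right]
      exact measure_diff_null (hatom t)
    have hIci : (μ (Set.Ici t)).toReal = α + β := by
      rw [← Set.compl_Iio, measure_compl measurableSet_Iio (measure_ne_top μ _), hIio,
        measure_univ, ENNReal.toReal_sub_of_le (prob_le_one) (by simp),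
        ENNReal.toReal_one, ← hG, htv]
      linarith
    -- null frontier of Ici t
    have hbdry : (ν : Measure ℝ) (frontier (Set.Ici t)) = 0 := by
      show μ (frontier (Set.Ici t)) = 0
      rw [frontier_Ici]
      exact hatom t
    have hXt : Tendsto (fun N => (((P N).map (X N)) (Set.Ici t)).toReal) atTop
        (𝓝 ((μ (Set.Ici t)).toReal)) :=
      (ENNReal.tendsto_toReal (measure_ne_top μ _)).comp
        (ProbabilityMeasure.tendsto_measure_of_null_frontier_of_tendsto' hXlim hbdry)
    have hYt : Tendsto (fun N => (((P N).map (Y N)) (Set.Ici t)).toReal) atTop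
        (𝓝 ((μ (Set.Ici t)).toReal)) :=
      (ENNReal.tendsto_toReal (measure_ne_top μ _)).comp
        (ProbabilityMeasure.tendsto_measure_of_null_frontier_of_tendsto' hYlim hbdry)
    -- eventually the randomized p-value at t exceeds α
    have hgt : ∀ᶠ N in atTop, α < (((P N).map (Y N)) (Set.Ici t)).toReal := by
      refine hYt.eventually (eventually_gt_nhds ?_)
      rw [hIci]; linarith
    have hev : ∀ᶠ N in atTop, T N ≤ (((P N).map (X N)) (Set.Ici t)).toReal := by
      filter_upwards [hgt] with N hN
      have hmapY' : ((P N).map (Y N)) (Set.Ici t) = (P N) {ω' | t ≤ Y N ω'} := by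
        rw [Measure.map_apply (hY N) measurableSet_Ici]
        rfl
      have hsub : {ω | ((P N) {ω' | X N ω ≤ Y N ω'}).toReal ≤ α} ⊆ X N ⁻¹' Set.Ici t := by
        intro ω hω
        simp only [Set.mem_setOf_eq] at hω
        by_contra hlt
        simp only [Set.mem_preimage, Set.mem_Ici, not_le] at hlt
        have hmono : (P N) {ω' | t ≤ Y N ω'} ≤ (P N) {ω' | X N ω ≤ Y N ω'} :=
          measure_mono fun ω' h => le_trans hlt.le h
        have := ENNReal.toReal_mono (measure_ne_top _ _) hmono
        rw [hmapY'] at hN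
        linarith
      calc T N ≤ ((P N) (X N ⁻¹' Set.Ici t)).toReal :=
            ENNReal.toReal_mono (measure_ne_top _ _) (measure_mono hsub)
        _ = (((P N).map (X N)) (Set.Ici t)).toReal := by
            rw [Measure.map_apply (hX N) measurableSet_Ici]
    have hbdd : IsBoundedUnder (· ≤ ·) atTop
        (fun N => (((P N).map (X N)) (Set.Ici t)).toReal) :=
      hXt.isBoundedUnder_le
    have hlim := limsup_le_limsup hev hTcobdd hbdd
    rw [hXt.limsup_eq, hIci] at hlim
    exact hlim
  -- conclude
  have hle1 : limsup T atTop ≤ 1 :=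
    limsup_le_of_le hTcobdd (Eventually.of_forall fun N => (hT01 N).2)
  rcases eq_or_lt_of_le hα1 with h1 | h1
  · rw [h1]; exact hle1
  · by_contra hcon
    push_neg at hcon
    set β : ℝ := min ((limsup T atTop - α) / 2) ((1 - α) / 2) with hβdef
    have hβ0 : 0 < β := lt_min (by linarith) (by linarith)
    have hβ1 : α + β < 1 := by
      have := min_le_right ((limsup T atTop - α) / 2) ((1 - α) / 2)
      have hβle : β ≤ (1 - α) / 2 := this
      linarith
    have := key β hβ0 hβ1
    have hβle : β ≤ (limsup T atTop - α) / 2 := min_le_left _ _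
    linarith
end

section
/- Let B be a positive integer and let T_0, T_1, …, T_B be real-valued random variables on a probability space (Ω, 𝒜, P) whose joint law is exchangeable, i.e., invariant under every permutation of the indices {0, 1, …, B}. Define the randomization p-value p := (1 + #{b ∈ {1, …, B} : T_b ≥ T_0}) / (B + 1). Then for every α ∈ [0,1], P(p ≤ α) ≤ α. -/
open MeasureTheory Finset

namespace Stmt5Aux

variable {B : ℕ}

/-- number of coordinates `j` with `t j ≥ t i` (includes `j = i`). -/
noncomputable def M (t : Fin (B + 1) → ℝ) (i : Fin (B + 1)) : ℕ :=
  (Finset.univ.filter (fun j => t j ≥ t i)).card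

/-- pointwise: at most `k` indices have `M t i ≤ k`. -/
lemma card_M_le (t : Fin (B + 1) → ℝ) (k : ℕ) :
    (Finset.univ.filter (fun i => M t i ≤ k)).card ≤ k := by
  set S := Finset.univ.filter (fun i => M t i ≤ k) with hS
  by_cases hne : S.Nonempty
  · obtain ⟨i₀, hi₀, hmin⟩ := S.exists_min_image t hne
    have h1 : S ⊆ Finset.univ.filter (fun j => t j ≥ t i₀) := by
      intro j hj
      simp only [Finset.mem_filter, Finset.mem_univ, true_and]
      exact hmin j hj
    calc S.card ≤ M t i₀ := Finset.card_le_card h1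
      _ ≤ k := (Finset.mem_filter.mp hi₀).2
  · rw [Finset.not_nonempty_iff_eq_empty] at hne
    simp [hne]

lemma M_perm (t : Fin (B + 1) → ℝ) (σ : Equiv.Perm (Fin (B + 1))) (i : Fin (B + 1)) :
    M (fun j => t (σ j)) i = M t (σ i) := by
  unfold M
  apply Finset.card_bij (fun j _ => σ j)
  · intro j hj
    simp only [Finset.mem_filter, Finset.mem_univ, true_and] at *
    exact hj
  · intro a _ b _ h
    exact σ.injective h
  · intro j hj
    exact ⟨σ.symm j, by simpa using (Finset.mem_filter.mp hj).2, by simp⟩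

lemma M_measurable (i : Fin (B + 1)) : Measurable (fun t : Fin (B + 1) → ℝ => M t i) := by
  have : (fun t : Fin (B + 1) → ℝ => M t i)
      = fun t => ∑ j : Fin (B + 1), if t j ≥ t i then 1 else 0 := by
    funext t
    simpa [M] using Finset.card_filter (fun j => t j ≥ t i) Finset.univ
  rw [this]
  apply Finset.measurable_sum
  intro j _
  exact Measurable.ite (measurableSet_le (measurable_pi_apply i) (measurable_pi_apply j))
    measurable_const measurable_const

lemma M_zero (t : Fin (B + 1) → ℝ) :
    M t 0 = 1 + (Finset.univ.filter (fun b : Fin B => t b.succ ≥ t 0)).card := by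
  have h1 : M t 0 = ∑ j : Fin (B + 1), if t j ≥ t 0 then 1 else 0 := by
    simpa [M] using Finset.card_filter (fun j => t j ≥ t 0) Finset.univ
  rw [h1, Fin.sum_univ_succ, if_pos (le_refl (t 0)), Finset.card_filter]

end Stmt5Aux

open Stmt5Aux

/-- Finite-sample validity of the Monte Carlo randomization p-value: if the statistics
`T 0, T 1, …, T B` are exchangeable, then the p-value
`p = (1 + #{b ∈ {1,…,B} : T b ≥ T 0}) / (B + 1)` is super-uniform. -/
theorem stmt_5 {Ω : Type*} [MeasurableSpace Ω] (P : Measure Ω) [IsProbabilityMeasure P]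
    (B : ℕ) (hB : 0 < B) (T : Fin (B + 1) → Ω → ℝ) (hT : ∀ i, Measurable (T i))
    (hexch : ∀ σ : Equiv.Perm (Fin (B + 1)),
      P.map (fun ω => fun i => T (σ i) ω) = P.map (fun ω => fun i => T i ω))
    (α : ℝ) (hα : α ∈ Set.Icc (0 : ℝ) 1) :
    (P {ω | ((1 + ((Finset.univ : Finset (Fin B)).filter
        (fun b => T b.succ ω ≥ T 0 ω)).card : ℝ) / (B + 1)) ≤ α}).toReal ≤ α := by
  obtain ⟨hα0, hα1⟩ := hα
  set F : Ω → (Fin (B + 1) → ℝ) := fun ω i => T i ω with hF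
  have hFmeas : Measurable F := measurable_pi_lambda _ hT
  set μ : Measure (Fin (B + 1) → ℝ) := P.map F with hμ
  haveI : IsProbabilityMeasure μ := Measure.isProbabilityMeasure_map hFmeas.aemeasurable
  -- the threshold
  have hαB : (0:ℝ) ≤ α * (B + 1) := by positivity
  set k : ℕ := ⌊α * (B + 1)⌋₊ with hk
  -- the events
  set A : Fin (B + 1) → Set (Fin (B + 1) → ℝ) := fun i => {t | M t i ≤ k} with hA
  have hAmeas : ∀ i, MeasurableSet (A i) := fun i =>
    (M_measurable i) (measurableSet_le measurable_id measurable_const)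
  -- exchangeability: μ (A i) = μ (A 0)
  have hAeq : ∀ i, μ (A i) = μ (A 0) := by
    intro i
    set σ : Equiv.Perm (Fin (B + 1)) := Equiv.swap 0 i with hσ
    have hσ0 : σ 0 = i := Equiv.swap_apply_left 0 i
    set G : (Fin (B + 1) → ℝ) → (Fin (B + 1) → ℝ) := fun t j => t (σ j) with hG
    have hGmeas : Measurable G := measurable_pi_lambda _ (fun j => measurable_pi_apply (σ j))
    have hmap : μ.map G = μ := by
      rw [hμ, Measure.map_map hGmeas hFmeas]
      exact hexch σ
    have : μ.map G (A 0) = μ (A i) := by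
      rw [Measure.map_apply hGmeas (hAmeas 0)]
      congr 1
      ext t
      simp only [Set.mem_preimage, hA, Set.mem_setOf_eq, hG, M_perm, hσ0]
    rw [← this, hmap]
  -- sum bound
  have hsum : ∑ i : Fin (B + 1), μ (A i) ≤ (k : ENNReal) := by
    have h1 : ∀ i : Fin (B + 1), μ (A i)
        = ∫⁻ t, (A i).indicator (fun _ => (1 : ENNReal)) t ∂μ := by
      intro i
      rw [lintegral_indicator (hAmeas i)]
      simp
    calc ∑ i : Fin (B + 1), μ (A i)
        = ∫⁻ t, ∑ i : Fin (B + 1), (A i).indicator (fun _ => (1 : ENNReal)) t ∂μ := by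
          rw [lintegral_finset_sum]
          · exact Finset.sum_congr rfl (fun i _ => h1 i)
          · exact fun i _ => (measurable_const.indicator (hAmeas i))
      _ ≤ ∫⁻ _, (k : ENNReal) ∂μ := by
          apply lintegral_mono
          intro t
          show ∑ i : Fin (B + 1), (A i).indicator (fun _ => (1 : ENNReal)) t ≤ (k : ENNReal)
          have : ∑ i : Fin (B + 1), (A i).indicator (fun _ => (1 : ENNReal)) t
              = ((Finset.univ.filter (fun i => M t i ≤ k)).card : ENNReal) := by
            rw [Finset.card_filter]
            push_cast
            refine Finset.sum_congr rfl (fun i _ => ?_)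
            by_cases hti : M t i ≤ k
            · rw [Set.indicator_of_mem (by exact hti), if_pos hti]
            · rw [Set.indicator_of_notMem (by exact hti), if_neg hti]
          rw [this]
          exact_mod_cast Nat.cast_le.mpr (card_M_le t k)
      _ = (k : ENNReal) := by simp
  have hconst : ∀ i, μ (A i) = μ (A 0) := hAeq
  have hsum' : (B + 1 : ENNReal) * μ (A 0) ≤ (k : ENNReal) := by
    have : ∑ i : Fin (B + 1), μ (A i) = (B + 1 : ENNReal) * μ (A 0) := by
      rw [Finset.sum_congr rfl (fun i _ => hAeq i)]
      simp [Finset.card_univ, mul_comm]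
    rwa [this] at hsum
  -- identify the event
  have hset : {ω | ((1 + ((Finset.univ : Finset (Fin B)).filter
        (fun b => T b.succ ω ≥ T 0 ω)).card : ℝ) / (B + 1)) ≤ α} = F ⁻¹' (A 0) := by
    ext ω
    simp only [Set.mem_setOf_eq, Set.mem_preimage, hA, hF]
    have hM0 : (M (fun i => T i ω) 0 : ℝ)
        = 1 + ((Finset.univ : Finset (Fin B)).filter
          (fun b => T b.succ ω ≥ T 0 ω)).card := by
      rw [M_zero]; push_cast; ring
    rw [div_le_iff₀ (by positivity : (0:ℝ) < (B:ℝ) + 1), ← hM0]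
    constructor
    · intro h
      exact Nat.le_floor (by push_cast; linarith)
    · intro h
      have h2 : (M (fun i => T i ω) 0 : ℝ) ≤ (k : ℝ) := by exact_mod_cast h
      have h3 : (k : ℝ) ≤ α * ((B:ℝ) + 1) := Nat.floor_le hαB
      linarith
  rw [hset, ← Measure.map_apply hFmeas (hAmeas 0), ← hμ]
  -- conclude: μ (A 0) ≤ k / (B+1) ≤ α
  have hμA : μ (A 0) ≤ (k : ENNReal) / (B + 1 : ENNReal) := by
    rw [ENNReal.le_div_iff_mul_le (by simp) (by simp)]
    rwa [mul_comm]
  have hfin : μ (A 0) ≠ ⊤ := measure_ne_top μ _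
  have : (μ (A 0)).toReal ≤ ((k : ENNReal) / (B + 1 : ENNReal)).toReal := by
    apply ENNReal.toReal_mono _ hμA
    exact (ENNReal.div_lt_top (by simp) (by simp)).ne
  refine this.trans ?_
  have hBne : ((B:ENNReal) + 1) ≠ 0 := by simp
  rw [ENNReal.toReal_div]
  have e1 : ((k:ENNReal)).toReal = (k:ℝ) := ENNReal.toReal_natCast k
  have e2 : ((B:ENNReal) + 1).toReal = (B:ℝ) + 1 := by
    rw [ENNReal.toReal_add (by simp) (by simp), ENNReal.toReal_natCast, ENNReal.toReal_one]
  rw [e1, e2]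
  rw [div_le_iff₀ (by positivity : (0:ℝ) < (B:ℝ) + 1)]
  calc (k:ℝ) ≤ α * ((B:ℝ) + 1) := by
        have := Nat.floor_le hαB
        simpa [hk] using this
    _ = α * ((B:ℝ) + 1) := rfl
end

section
/- Let m be a positive integer, s : Fin m → ℝ a finite family of real values, and let J be a random index distributed uniformly on Fin m, with T := s(J). Define the p-value function pval(t) := #{j ∈ Fin m : s(j) ≥ t} / m. Then for every α ∈ [0,1], P(pval(T) ≤ α) ≤ α. -/
open MeasureTheory

/-- Exact super-uniformity of the randomization p-value over a finite set of assignments: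
if `J` is uniform on `Fin m` and `pval t = #{j : s j ≥ t} / m`, then
`P(pval (s J) ≤ α) ≤ α` for all `α ∈ [0,1]`. -/
theorem stmt_6 {Ω : Type*} [MeasurableSpace Ω] (P : Measure Ω) [IsProbabilityMeasure P]
    (m : ℕ) (hm : 0 < m) (s : Fin m → ℝ)
    (J : Ω → Fin m) (hJ : Measurable J)
    (hunif : ∀ j : Fin m, P {ω | J ω = j} = (m : ENNReal)⁻¹)
    (α : ℝ) (hα : α ∈ Set.Icc (0 : ℝ) 1) :
    (P {ω | (((Finset.univ : Finset (Fin m)).filter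
        (fun j => s j ≥ s (J ω))).card : ℝ) / m ≤ α}).toReal ≤ α := by
  obtain ⟨hα0, hα1⟩ := hα
  set c : Fin m → ℕ := fun j => ((Finset.univ : Finset (Fin m)).filter (fun k => s k ≥ s j)).card with hc
  set A : Finset (Fin m) := Finset.univ.filter (fun j => (c j : ℝ) / m ≤ α) with hA
  -- combinatorial bound: A.card ≤ α * m
  have hcard : (A.card : ℝ) ≤ α * m := by
    rcases A.eq_empty_or_nonempty with h | h
    · simp [h]
      positivity
    · obtain ⟨j0, hj0A, hj0min⟩ := A.exists_min_image s h
      have hsub : A ⊆ (Finset.univ : Finset (Fin m)).filter (fun k => s k ≥ s j0) := by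
        intro k hk
        simp only [Finset.mem_filter, Finset.mem_univ, true_and]
        exact hj0min k hk
      have h1 : (A.card : ℝ) ≤ (c j0 : ℝ) := by
        exact_mod_cast Finset.card_le_card hsub
      have h2 : (c j0 : ℝ) / m ≤ α := by
        have := hj0A
        simp only [hA, Finset.mem_filter] at this
        exact this.2
      have hm' : (0:ℝ) < m := by exact_mod_cast hm
      calc (A.card : ℝ) ≤ (c j0 : ℝ) := h1
        _ ≤ α * m := by
            rw [div_le_iff₀ hm'] at h2; linarith
  -- rewrite the event
  have hset : {ω | (((Finset.univ : Finset (Fin m)).filter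
      (fun j => s j ≥ s (J ω))).card : ℝ) / m ≤ α} = ⋃ j ∈ A, {ω | J ω = j} := by
    ext ω
    simp only [Set.mem_setOf_eq, Set.mem_iUnion]
    constructor
    · intro hω
      exact ⟨J ω, by simp [hA, Finset.mem_filter, hc]; exact hω, rfl⟩
    · rintro ⟨j, hj, hje⟩
      simp only [hA, Finset.mem_filter, hc] at hj
      rw [hje]
      exact hj.2
  rw [hset]
  have hdisj : (A : Set (Fin m)).PairwiseDisjoint (fun j => {ω | J ω = j}) := by
    intro i _ j _ hij
    simp only [Function.onFun, Set.disjoint_left]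
    rintro ω rfl h2
    exact hij h2
  have hmeas : ∀ j ∈ A, MeasurableSet {ω | J ω = j} :=
    fun j _ => hJ (MeasurableSet.singleton j)
  rw [measure_biUnion_finset hdisj hmeas]
  have : ∑ j ∈ A, P {ω | J ω = j} = A.card * (m : ENNReal)⁻¹ := by
    rw [Finset.sum_congr rfl (fun j _ => hunif j)]
    simp [mul_comm]
  rw [this]
  have hmne : (m : ENNReal) ≠ 0 := by exact_mod_cast hm.ne'
  have htop : (m : ENNReal) ≠ ⊤ := ENNReal.natCast_ne_top m
  rw [ENNReal.toReal_mul, ENNReal.toReal_inv]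
  simp only [ENNReal.toReal_natCast]
  have hm' : (0:ℝ) < m := by exact_mod_cast hm
  rw [mul_inv_le_iff₀ hm']
  exact hcard
end

section
/- Let (Ω, 𝒜, P) be a probability space, γ ∈ [0,1], E ∈ 𝒜 an event with P(Eᶜ) ≤ γ, and let X, Y be real-valued random variables such that: (a) X ≥ 0 almost surely; (b) P(X ≤ t) ≤ t for every t ∈ [0,1]; (c) Y ≥ γ almost surely; and (d) Y(ω) ≥ X(ω) + γ for every ω ∈ E. Then for every α ∈ [0,1], P(Y ≤ α) ≤ α. -/
open MeasureTheory

/-- Berger–Boos type inequality: if `X` is super-uniform, `Y ≥ γ` a.s., `Y ≥ X + γ` on an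
event `E` with `P(Eᶜ) ≤ γ`, then `Y` is super-uniform: `P(Y ≤ α) ≤ α` for `α ∈ [0,1]`. -/
theorem stmt_7 {Ω : Type*} [MeasurableSpace Ω] (P : Measure Ω) [IsProbabilityMeasure P]
    (γ : ℝ) (hγ : γ ∈ Set.Icc (0 : ℝ) 1)
    (E : Set Ω) (hE : MeasurableSet E) (hEc : (P Eᶜ).toReal ≤ γ)
    (X Y : Ω → ℝ) (hXm : Measurable X) (hYm : Measurable Y)
    (ha : ∀ᵐ ω ∂P, 0 ≤ X ω)
    (hb : ∀ t ∈ Set.Icc (0 : ℝ) 1, (P {ω | X ω ≤ t}).toReal ≤ t)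
    (hc : ∀ᵐ ω ∂P, γ ≤ Y ω)
    (hd : ∀ ω ∈ E, X ω + γ ≤ Y ω)
    (α : ℝ) (hα : α ∈ Set.Icc (0 : ℝ) 1) :
    (P {ω | Y ω ≤ α}).toReal ≤ α := by
  obtain ⟨hα0, hα1⟩ := hα
  obtain ⟨hγ0, hγ1⟩ := hγ
  by_cases hcase : α < γ
  · have hnull : P {ω | Y ω ≤ α} = 0 := by
      have h0 : P {ω | ¬ γ ≤ Y ω} = 0 := hc
      refine measure_mono_null (fun ω hω => ?_) h0
      simp only [Set.mem_setOf_eq] at *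
      linarith
    simp [hnull, hα0]
  · push_neg at hcase
    have hsub : {ω | Y ω ≤ α} ⊆ {ω | X ω ≤ α - γ} ∪ Eᶜ := by
      intro ω hω
      by_cases hωE : ω ∈ E
      · left
        have := hd ω hωE
        simp only [Set.mem_setOf_eq] at *
        linarith
      · exact Or.inr hωE
    have h1 : P {ω | Y ω ≤ α} ≤ P {ω | X ω ≤ α - γ} + P Eᶜ :=
      le_trans (measure_mono hsub) (measure_union_le _ _)
    have hX : (P {ω | X ω ≤ α - γ}).toReal ≤ α - γ :=
      hb (α - γ) ⟨by linarith, by linarith⟩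
    have hfin1 : P {ω | X ω ≤ α - γ} ≠ ⊤ := measure_ne_top P _
    have hfin2 : P Eᶜ ≠ ⊤ := measure_ne_top P _
    calc (P {ω | Y ω ≤ α}).toReal
        ≤ (P {ω | X ω ≤ α - γ} + P Eᶜ).toReal := by
          exact ENNReal.toReal_mono (by simp [hfin1, hfin2]) h1
      _ = (P {ω | X ω ≤ α - γ}).toReal + (P Eᶜ).toReal :=
          ENNReal.toReal_add hfin1 hfin2
      _ ≤ (α - γ) + γ := add_le_add hX hEc
      _ = α := by ring
end
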